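/- arXiv:0911.2048 — 2 statements merged into one kernel-verified Lean document; each statement's English description precedes it below -/
import Mathlib

section
/- Every finite nilpotent group of odd order is D^∞-balanced: it admits a cycle g of some length L divisible by the order n of the group such that D^r(g) is balanced for every integer r ≥ 0. -/
/-- The difference operator `D` on cycles of length `L` over `G`:
`D(g)(i) = g(i) * g(i+1)⁻¹`. -/
def Dop {G : Type*} [Group G] {L : ℕ} (g : ZMod L → G) : ZMod L → G :=
  fun i => g i * (g (i + 1))⁻¹

/-- A cycle of length `L` over a group `G` of order `n` (with `n ∣ L`) is balanced if
every element of `G` occurs exactly `L / n` times among its values. -/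
def IsBalanced (G : Type*) [Group G] {L : ℕ} (g : ZMod L → G) : Prop :=
  ∀ x : G, Nat.card {i : ZMod L // g i = x} = L / Nat.card G

universe u

/- ### Auxiliary lemmas -/

private lemma digit_step {M m n : ℕ} (hM : 0 < M) (hm : 2 ≤ m) (hn : n = M * m)
    {b : ℕ} (hb : b < n) :
    ((((b + 2 * M) % n) / M : ℕ) : ZMod m) = ((b / M : ℕ) : ZMod m) + 2 := by
  subst hn
  have hq : b / M < m := Nat.div_lt_of_lt_mul (by omega)
  rcases lt_or_ge (b + 2 * M) (M * m) with h | h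
  · rw [Nat.mod_eq_of_lt h]
    rw [show b + 2 * M = b + M * 2 by ring, Nat.add_mul_div_left _ _ hM]
    push_cast; ring
  · set q := b / M with hqdef
    set s := b % M with hsdef
    have hbqs : M * q + s = b := Nat.div_add_mod b M
    have hsM : s < M := Nat.mod_lt _ hM
    have hqm : m ≤ q + 2 := by nlinarith [hbqs, hsM, h]
    obtain ⟨t, ht⟩ : ∃ t, q + 2 = m + t := ⟨q + 2 - m, by omega⟩
    have ht1 : t ≤ 1 := by omega
    have hsum : b + 2 * M = M * m + (M * t + s) := by
      have : M * (q + 2) = M * m + M * t := by rw [ht]; ring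
      nlinarith [hbqs, this]
    have hlt : M * t + s < M * m := by nlinarith
    have hmod : (b + 2 * M) % (M * m) = M * t + s := by
      rw [hsum, Nat.add_mod_left, Nat.mod_eq_of_lt hlt]
    rw [hmod, Nat.mul_add_div hM, Nat.div_eq_of_lt hsM, add_zero]
    have : ((q + 2 : ℕ) : ZMod m) = ((m + t : ℕ) : ZMod m) := by rw [ht]
    push_cast at this
    simp only [ZMod.natCast_self, zero_add] at this
    rw [← this]

section zp
variable {G : Type u} [Group G] {z : G} {m : ℕ} [NeZero m]

private lemma zp_add (hord : orderOf z = m) (a b : ZMod m) :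
    z ^ (a + b).val = z ^ a.val * z ^ b.val := by
  rw [← pow_add]
  apply pow_eq_pow_iff_modEq.mpr
  rw [hord, ZMod.val_add]
  exact Nat.mod_modEq _ _

private lemma zp_inj (hord : orderOf z = m) {a b : ZMod m} (h : z ^ a.val = z ^ b.val) : a = b := by
  have h1 : a.val % m = b.val % m := by
    have := pow_eq_pow_iff_modEq.mp h
    rwa [hord] at this
  rw [Nat.mod_eq_of_lt (ZMod.val_lt a), Nat.mod_eq_of_lt (ZMod.val_lt b)] at h1
  exact ZMod.val_injective m h1

private lemma zp_sub (hord : orderOf z = m) (a b : ZMod m) :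
    z ^ (a - b).val = z ^ a.val * (z ^ b.val)⁻¹ := by
  have hab : a - b + b = a := by ring
  have h := zp_add hord (a - b) b
  rw [hab] at h
  rw [eq_mul_inv_iff_mul_eq]
  exact h.symm

private lemma zp_intCast (hord : orderOf z = m) (k : ℤ) : z ^ ((k : ZMod m)).val = z ^ k := by
  have h : z ^ (((k : ZMod m).val : ℤ)) = z ^ k := by
    apply zpow_eq_zpow_iff_modEq.mpr
    rw [hord, ZMod.val_intCast]
    exact Int.emod_emod_of_dvd _ dvd_rfl
  rw [← h, zpow_natCast]

end zp

private lemma central_fold {G : Type u} [Group G] {p q : G}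
    (hp : ∀ w, w * p = p * w) (hq : ∀ w, w * q = q * w) (A B : G) :
    (A * p) * (B * q)⁻¹ = (A * B⁻¹) * (p * q⁻¹) := by
  have h1 : q⁻¹ * B⁻¹ = B⁻¹ * q⁻¹ := ((show Commute B⁻¹ q from hq B⁻¹).inv_right).eq.symm
  have h2 : p * B⁻¹ = B⁻¹ * p := ((show Commute B⁻¹ p from hp B⁻¹).symm).eq
  calc (A * p) * (B * q)⁻¹ = A * (p * (q⁻¹ * B⁻¹)) := by rw [mul_inv_rev, mul_assoc]
    _ = A * (p * (B⁻¹ * q⁻¹)) := by rw [h1]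
    _ = A * ((p * B⁻¹) * q⁻¹) := by rw [mul_assoc]
    _ = A * ((B⁻¹ * p) * q⁻¹) := by rw [h2]
    _ = (A * B⁻¹) * (p * q⁻¹) := by simp only [mul_assoc]

private lemma exists_central {G : Type u} [Group G] [hGnil : Group.IsNilpotent G] [Nontrivial G] :
    ∃ z : G, z ≠ 1 ∧ z ∈ Subgroup.center G := by
  by_contra h
  push_neg at h
  have hc : Subgroup.center G = ⊥ := by
    rw [eq_bot_iff]; intro x hx
    rw [Subgroup.mem_bot]
    by_contra hx1
    exact h x hx1 hx
  have hall : ∀ k, Subgroup.upperCentralSeries G k = ⊥ := by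
    intro k; induction k with
    | zero => exact Subgroup.upperCentralSeries_zero G
    | succ k ihk =>
      rw [eq_bot_iff]; intro x hx
      rw [mem_upperCentralSeries_succ_iff] at hx
      have hxc : x ∈ Subgroup.center G := by
        rw [Subgroup.mem_center_iff]; intro g
        have h2 := hx g
        rw [ihk, Subgroup.mem_bot] at h2
        have h3 : x * g * x⁻¹ = g := by
          have := mul_eq_one_iff_eq_inv.mp h2
          rw [this]; group
        calc g * x = (x * g * x⁻¹) * x := by rw [h3]
          _ = x * g := by group
      rw [hc, Subgroup.mem_bot] at hxc
      rw [Subgroup.mem_bot]; exact hxc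
  obtain ⟨k, hk⟩ := hGnil.nilpotent'
  obtain ⟨x, hx1⟩ := exists_ne (1 : G)
  have : x ∈ (⊥ : Subgroup G) := by rw [← hall k, hk]; exact Subgroup.mem_top x
  exact hx1 (Subgroup.mem_bot.mp this)

/- ### The counting lemma -/

private lemma count_core {G : Type u} [Group G] {m M n : ℕ} [NeZero m] [NeZero (2*n)] [NeZero (2*M)]
    (hn : n = M * m)
    {z : G} (hord : orderOf z = m)
    (red : ZMod (2*n) →+* ZMod (2*M))
    (f : ZMod (2*n) → G) (W : ZMod (2*M) → G) (E u : ZMod (2*n) → ZMod m)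
    (hf : ∀ i, f i = W (red i) * z ^ (E i).val)
    (hE : ∀ i, E (i + ((2*M : ℕ) : ZMod (2*n))) = E i + u i)
    (hu : ∀ i, u (i + ((2*M : ℕ) : ZMod (2*n))) = u i)
    (huu : ∀ i, IsUnit (u i)) (x : G) :
    Nat.card {i : ZMod (2*n) // f i = x}
      = Nat.card {ι : ZMod (2*M) // (W ι)⁻¹ * x ∈ Subgroup.zpowers z} := by
  have hM0 : 0 < M := by
    have := NeZero.pos (2*M); omega
  have hcast : ∀ k : ℕ, ((2*M*(k+1) : ℕ) : ZMod (2*n))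
      = ((2*M*k : ℕ) : ZMod (2*n)) + ((2*M : ℕ) : ZMod (2*n)) := by
    intro k; push_cast; ring
  have huk : ∀ (k : ℕ) (i : ZMod (2*n)), u (i + ((2*M*k : ℕ) : ZMod (2*n))) = u i := by
    intro k; induction k with
    | zero => intro i; simp
    | succ k ihk =>
      intro i
      rw [hcast k, ← add_assoc, hu, ihk]
  have hEk : ∀ (k : ℕ) (i : ZMod (2*n)),
      E (i + ((2*M*k : ℕ) : ZMod (2*n))) = E i + (k : ZMod m) * u i := by
    intro k; induction k with
    | zero => intro i; simp
    | succ k ihk =>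
      intro i
      rw [hcast k, ← add_assoc, hE, ihk, huk]
      push_cast; ring
  have hredval : ∀ i : ZMod (2*n), red i = ((i.val : ℕ) : ZMod (2*M)) := by
    intro i
    conv_lhs => rw [← ZMod.natCast_zmod_val i]
    rw [map_natCast]
  have hfiber : ∀ d : ZMod (2*n), red d = 0 →
      ∃ k : ℕ, k < m ∧ d = ((2*M*k : ℕ) : ZMod (2*n)) := by
    intro d hd
    rw [hredval, ZMod.natCast_eq_zero_iff] at hd
    obtain ⟨k, hk⟩ := hd
    refine ⟨k, ?_, ?_⟩
    · have h1 : d.val < 2*n := ZMod.val_lt d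
      have h2 : 2*M*k < 2*M*m := by
        rw [← hk]; calc d.val < 2*n := h1
          _ = 2*M*m := by rw [hn]; ring
      exact Nat.lt_of_mul_lt_mul_left h2
    · rw [← hk, ZMod.natCast_zmod_val]
  let S1 := {i : ZMod (2*n) // f i = x}
  let S2 := {ι : ZMod (2*M) // (W ι)⁻¹ * x ∈ Subgroup.zpowers z}
  let φ : S1 → S2 := fun p => ⟨red p.1, by
    have hp := p.2
    rw [hf] at hp
    have h2 : (W (red p.1))⁻¹ * x = z ^ (E p.1).val := by
      have h3 : (W (red p.1))⁻¹ * (W (red p.1) * z ^ (E p.1).val) = z ^ (E p.1).val := by group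
      rwa [hp] at h3
    rw [h2]
    exact pow_mem (Subgroup.mem_zpowers z) _⟩
  have hbij : Function.Bijective φ := by
    constructor
    · rintro ⟨i, hi⟩ ⟨j, hj⟩ hij
      have hij' : red i = red j := congrArg Subtype.val hij
      have hd : red (j - i) = 0 := by rw [map_sub, hij', sub_self]
      obtain ⟨k, hkm, hk⟩ := hfiber _ hd
      have hj' : j = i + ((2*M*k : ℕ) : ZMod (2*n)) := by rw [← hk]; ring
      have hzz : z ^ (E i).val = z ^ (E j).val := by
        have h1 : W (red i) * z ^ (E i).val = W (red j) * z ^ (E j).val := by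
          rw [← hf, ← hf, hi, hj]
        rw [hij'] at h1
        exact mul_left_cancel h1
      have hEij : E i = E j := zp_inj hord hzz
      rw [hj', hEk] at hEij
      have hku : (k : ZMod m) * u i = 0 := left_eq_add.mp hEij
      have hk0 : (k : ZMod m) = 0 := by
        have h0 : (k : ZMod m) * u i = 0 * u i := by rw [hku, zero_mul]
        exact (huu i).mul_right_cancel h0
      rw [ZMod.natCast_eq_zero_iff] at hk0
      have hk00 : k = 0 := Nat.eq_zero_of_dvd_of_lt hk0 hkm
      rw [hk00] at hj'
      simp only [Nat.mul_zero, Nat.cast_zero, add_zero] at hj'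
      exact Subtype.ext hj'.symm
    · rintro ⟨ι, hι⟩
      obtain ⟨kz, hkz⟩ := Subgroup.mem_zpowers_iff.mp hι
      set i0 : ZMod (2*n) := ((ι.val : ℕ) : ZMod (2*n)) with hi0
      have hred0 : red i0 = ι := by rw [hi0, map_natCast, ZMod.natCast_zmod_val]
      have hza : z ^ (((kz : ℤ) : ZMod m)).val = (W ι)⁻¹ * x := by
        rw [zp_intCast hord]; exact hkz
      obtain ⟨v, hv1, hv2⟩ := isUnit_iff_exists.mp (huu i0)
      set k : ZMod m := v * (((kz : ℤ) : ZMod m) - E i0) with hkdef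
      set i : ZMod (2*n) := i0 + ((2*M*(k.val) : ℕ) : ZMod (2*n)) with hidef
      have hredi : red i = ι := by
        rw [hidef, map_add, hred0, map_natCast]
        have h0 : ((2*M*(k.val) : ℕ) : ZMod (2*M)) = 0 := by
          rw [ZMod.natCast_eq_zero_iff]
          exact ⟨k.val, by ring⟩
        rw [h0, add_zero]
      have hEi : E i = ((kz : ℤ) : ZMod m) := by
        rw [hidef, hEk, ZMod.natCast_zmod_val, hkdef]
        calc E i0 + v * (((kz : ℤ) : ZMod m) - E i0) * u i0
            = E i0 + (((kz : ℤ) : ZMod m) - E i0) * (u i0 * v) := by ring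
          _ = ((kz : ℤ) : ZMod m) := by rw [hv1]; ring
      refine ⟨⟨i, ?_⟩, ?_⟩
      · rw [hf, hredi, hEi, hza]
        group
      · exact Subtype.ext hredi
  exact Nat.card_eq_of_bijective φ hbij

/- ### The structure lemma -/

private lemma structR {G : Type u} [Group G] {m M n : ℕ} [NeZero m] [NeZero (2*n)] [NeZero (2*M)]
    {z : G} (hzc : z ∈ Subgroup.center G) (hord : orderOf z = m)
    (red : ZMod (2*n) →+* ZMod (2*M))
    {Qt : Type u} [Group Qt] (π : G →* Qt)
    (gQ : ZMod (2*M) → Qt)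
    (sgn cc : ZMod (2*n) → ZMod m)
    (hsgn1 : ∀ i, sgn (i+1) = - sgn i)
    (hsgn2 : ∀ i, sgn (i + ((2*M:ℕ) : ZMod (2*n))) = sgn i)
    (hcc : ∀ i, cc (i + ((2*M:ℕ) : ZMod (2*n))) = cc i + 2)
    (W0 : ZMod (2*M) → G) (hW0 : ∀ ι, π (W0 ι) = gQ ι)
    (r : ℕ) :
    ∃ (W : ZMod (2*M) → G) (E : ZMod (2*n) → ZMod m),
      (∀ i, (Dop^[r] (fun i => W0 (red i) * z ^ ((sgn i * cc i : ZMod m)).val)) i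
          = W (red i) * z ^ (E i).val) ∧
      (∀ ι, π (W ι) = (Dop^[r] gQ) ι) ∧
      (∀ i, E (i + ((2*M:ℕ) : ZMod (2*n))) = E i + sgn i * 2^(r+1)) := by
  have hzcom : ∀ (w : G) (a : ZMod m), w * z ^ a.val = z ^ a.val * w := by
    intro w a
    exact (Subgroup.mem_center_iff.mp (Subgroup.center G |>.pow_mem hzc a.val) w)
  induction r with
  | zero =>
    refine ⟨W0, fun i => sgn i * cc i, fun i => rfl, fun ι => hW0 ι, fun i => ?_⟩
    show sgn (i + ((2*M:ℕ) : ZMod (2*n))) * cc (i + ((2*M:ℕ) : ZMod (2*n)))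
        = sgn i * cc i + sgn i * 2^(0+1)
    rw [hsgn2, hcc]
    ring
  | succ r ih =>
    obtain ⟨W, E, h1, h2, h3⟩ := ih
    refine ⟨fun ι => W ι * (W (ι+1))⁻¹, fun i => E i - E (i+1), ?_, ?_, ?_⟩
    · intro i
      rw [Function.iterate_succ_apply']
      show (Dop^[r] _) i * ((Dop^[r] _) (i+1))⁻¹ = _
      rw [h1 i, h1 (i+1), map_add, map_one]
      rw [central_fold (fun w => hzcom w _) (fun w => hzcom w _)]
      rw [← zp_sub hord]
    · intro ι
      rw [Function.iterate_succ_apply']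
      show π ((W ι) * (W (ι+1))⁻¹) = (Dop^[r] gQ) ι * ((Dop^[r] gQ) (ι+1))⁻¹
      rw [map_mul, map_inv, h2, h2]
    · intro i
      have e1 : (i + 1) + ((2*M:ℕ) : ZMod (2*n)) = (i + ((2*M:ℕ) : ZMod (2*n))) + 1 := by ring
      show E (i + _) - E ((i + ((2*M:ℕ) : ZMod (2*n))) + 1) = (E i - E (i+1)) + sgn i * 2^(r+1+1)
      rw [← e1, h3, h3, hsgn1]
      ring

/- ### The induction step -/

private lemma step {G : Type u} [Group G] [Finite G] {z : G}
    [hNorm : (Subgroup.zpowers z).Normal]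
    {m M n : ℕ}
    (hzc : z ∈ Subgroup.center G) (hz1 : z ≠ 1)
    (hord : orderOf z = m) (hMdef : Nat.card (G ⧸ Subgroup.zpowers z) = M)
    (hndef : Nat.card G = n) (hodd : Odd n)
    (gQ : ZMod (2 * M) → G ⧸ Subgroup.zpowers z)
    (hgQ : ∀ r, IsBalanced (G ⧸ Subgroup.zpowers z) (Dop^[r] gQ)) :
    ∃ g : ZMod (2 * n) → G, ∀ r, IsBalanced G (Dop^[r] g) := by
  classical
  have hn : n = M * m := by
    rw [← hndef, ← hMdef, ← hord, ← Nat.card_zpowers]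
    exact Subgroup.card_eq_card_quotient_mul_card_subgroup _
  have hm0 : 0 < m := hord ▸ orderOf_pos z
  have hm1 : m ≠ 1 := fun h => hz1 (orderOf_eq_one_iff.mp (hord.trans h))
  have hm2 : 2 ≤ m := by omega
  have hM0 : 0 < M := hMdef ▸ Nat.card_pos
  have hn0 : 0 < n := hndef ▸ Nat.card_pos
  haveI : NeZero m := ⟨by omega⟩
  haveI : NeZero (2*n) := ⟨by omega⟩
  haveI : NeZero (2*M) := ⟨by omega⟩
  have hmodd : Odd m := by
    rcases Nat.even_or_odd m with he | ho
    · exfalso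
      have h2m : (2:ℕ) ∣ m := he.two_dvd
      have h2n : (2:ℕ) ∣ n := h2m.trans ⟨M, by rw [hn]; ring⟩
      exact (Nat.not_even_iff_odd.mpr hodd) (even_iff_two_dvd.mpr h2n)
    · exact ho
  -- data
  have hdvd : (2*M) ∣ (2*n) := ⟨m, by rw [hn]; ring⟩
  set red : ZMod (2*n) →+* ZMod (2*M) := ZMod.castHom hdvd (ZMod (2*M)) with hred
  have hdvd2 : (2:ℕ) ∣ (2*n) := ⟨n, rfl⟩
  set par : ZMod (2*n) →+* ZMod 2 := ZMod.castHom hdvd2 (ZMod 2) with hpar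
  set sgn : ZMod (2*n) → ZMod m := fun i => if par i = 0 then 1 else -1 with hsgn
  set cc : ZMod (2*n) → ZMod m := fun i => (((i.val % n) / M : ℕ) : ZMod m) with hccdef
  set π : G →* G ⧸ Subgroup.zpowers z := QuotientGroup.mk' (Subgroup.zpowers z) with hpi
  set W0 : ZMod (2*M) → G := fun ι => (gQ ι).out with hW0def
  have hW0 : ∀ ι, π (W0 ι) = gQ ι := by
    intro ι
    rw [hW0def, hpi]
    exact QuotientGroup.out_eq' (gQ ι)
  -- sign lemmas
  have hzmod2 : ∀ x : ZMod 2, x = 0 ∨ x = 1 := by decide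
  have hsgn1 : ∀ i, sgn (i+1) = - sgn i := by
    intro i
    show (if par (i+1) = 0 then (1 : ZMod m) else -1) = - (if par i = 0 then 1 else -1)
    rw [map_add, map_one]
    rcases hzmod2 (par i) with h | h
    · rw [h, if_pos rfl, if_neg (by decide : ¬((0:ZMod 2)+1 = 0))]
    · rw [h, if_pos (by decide : ((1:ZMod 2)+1 = 0)), if_neg (by decide : ¬((1:ZMod 2) = 0)),
        neg_neg]
  have hsgn2 : ∀ i, sgn (i + ((2*M:ℕ) : ZMod (2*n))) = sgn i := by
    intro i
    show (if par (i + ((2*M:ℕ) : ZMod (2*n))) = 0 then (1 : ZMod m) else -1)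
        = (if par i = 0 then 1 else -1)
    rw [map_add, map_natCast]
    have h0 : ((2*M : ℕ) : ZMod 2) = 0 := by
      rw [ZMod.natCast_eq_zero_iff]
      exact ⟨M, rfl⟩
    rw [h0, add_zero]
  have hcc : ∀ i, cc (i + ((2*M:ℕ) : ZMod (2*n))) = cc i + 2 := by
    intro i
    show ((((i + ((2*M:ℕ) : ZMod (2*n))).val % n) / M : ℕ) : ZMod m)
        = (((i.val % n) / M : ℕ) : ZMod m) + 2
    have h2Mlt : 2*M < 2*n := by
      have : M < n := by
        rw [hn]
        exact (Nat.lt_mul_iff_one_lt_right hM0).mpr (by omega)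
      omega
    have hval : (i + ((2*M : ℕ) : ZMod (2*n))).val = (i.val + 2*M) % (2*n) := by
      rw [ZMod.val_add, ZMod.val_natCast, Nat.mod_eq_of_lt h2Mlt]
    have ha : ((i.val + 2*M) % (2*n)) % n = (i.val + 2*M) % n :=
      Nat.mod_mod_of_dvd _ ⟨2, by ring⟩
    have hb : (i.val + 2*M) % n = ((i.val % n) + 2*M) % n :=
      (Nat.ModEq.add_right (2*M) (Nat.mod_modEq i.val n)).symm
    rw [hval, ha, hb]
    exact digit_step hM0 hm2 hn (Nat.mod_lt _ hn0)
  -- the cycle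
  refine ⟨fun i => W0 (red i) * z ^ ((sgn i * cc i : ZMod m)).val, ?_⟩
  intro r x
  obtain ⟨W, E, h1, h2, h3⟩ := structR hzc hord red π gQ sgn cc hsgn1 hsgn2 hcc W0 hW0 r
  -- two-unit
  have h2u : IsUnit (2 : ZMod m) := by
    have hcop : Nat.Coprime 2 m := (Nat.prime_two.coprime_iff_not_dvd).mpr
      (fun h2 => (Nat.not_even_iff_odd.mpr hmodd) (even_iff_two_dvd.mpr h2))
    have := (ZMod.isUnit_iff_coprime 2 m).mpr hcop
    simpa using this
  have hsu : ∀ i, IsUnit (sgn i) := by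
    intro i
    show IsUnit (if par i = 0 then (1 : ZMod m) else -1)
    rcases hzmod2 (par i) with h | h
    · rw [h, if_pos rfl]; exact isUnit_one
    · rw [h, if_neg (by decide : ¬((1:ZMod 2) = 0))]; exact isUnit_one.neg
  have hucount := count_core hn hord red (Dop^[r] (fun i => W0 (red i) * z ^ ((sgn i * cc i : ZMod m)).val))
    W E (fun i => sgn i * 2^(r+1)) h1
    (fun i => by
      show E (i + ((2*M:ℕ) : ZMod (2*n))) = E i + sgn i * 2^(r+1)
      exact h3 i)
    (fun i => by
      show sgn (i + ((2*M:ℕ) : ZMod (2*n))) * 2^(r+1) = sgn i * 2^(r+1)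
      rw [hsgn2])
    (fun i => (hsu i).mul (h2u.pow (r+1))) x
  rw [hucount]
  have hbr : Nat.card {ι : ZMod (2*M) // (W ι)⁻¹ * x ∈ Subgroup.zpowers z}
      = Nat.card {ι : ZMod (2*M) // (Dop^[r] gQ) ι = π x} := by
    apply Nat.card_congr
    apply Equiv.subtypeEquivRight
    intro ι
    rw [← h2 ι, hpi, QuotientGroup.mk'_apply, QuotientGroup.mk'_apply]
    exact (QuotientGroup.eq).symm
  rw [hbr]
  have hQcount := hgQ r (π x)
  rw [hQcount, hMdef, hndef]
  rw [Nat.mul_div_cancel _ hM0, Nat.mul_div_cancel _ hn0]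

/- ### Strong induction -/

private lemma key : ∀ (n : ℕ) (G : Type u) [Group G] [Finite G], Group.IsNilpotent G →
    Odd (Nat.card G) → Nat.card G = n →
    ∃ g : ZMod (2 * n) → G, ∀ r : ℕ, IsBalanced G (Dop^[r] g) := by
  intro n
  induction n using Nat.strong_induction_on with
  | _ n ih =>
    intro G _ _ hnil hodd hcard
    subst hcard
    rcases subsingleton_or_nontrivial G with hsub | hnont
    · have h1 : Nat.card G = 1 := Nat.card_eq_one_iff_unique.mpr ⟨hsub, inferInstance⟩
      refine ⟨fun _ => 1, ?_⟩
      intro r x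
      have hval : ∀ i : ZMod (2 * Nat.card G), (Dop^[r] (fun _ => (1:G))) i = x :=
        fun i => Subsingleton.elim _ _
      have hcount : Nat.card {i : ZMod (2 * Nat.card G) // (Dop^[r] (fun _ => (1:G))) i = x}
          = 2 * Nat.card G :=
        (Nat.card_congr (Equiv.subtypeUnivEquiv hval)).trans (Nat.card_zmod _)
      rw [hcount, h1]
    · haveI := hnil
      obtain ⟨z, hz1, hzc⟩ := exists_central (G := G)
      haveI hNorm : (Subgroup.zpowers z).Normal := by
        constructor
        intro a ha g
        have hac : a ∈ Subgroup.center G := (Subgroup.zpowers_le.mpr hzc) ha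
        have hcomm := Subgroup.mem_center_iff.mp hac g
        have : g * a * g⁻¹ = a := by rw [hcomm]; group
        rw [this]; exact ha
      have hm0 : 0 < orderOf z := orderOf_pos z
      have hm1 : orderOf z ≠ 1 := fun h => hz1 (orderOf_eq_one_iff.mp h)
      have hn : Nat.card G = Nat.card (G ⧸ Subgroup.zpowers z) * orderOf z := by
        rw [← Nat.card_zpowers]
        exact Subgroup.card_eq_card_quotient_mul_card_subgroup _
      have hM0 : 0 < Nat.card (G ⧸ Subgroup.zpowers z) := Nat.card_pos
      have hMlt : Nat.card (G ⧸ Subgroup.zpowers z) < Nat.card G := by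
        have h2 : Nat.card (G ⧸ Subgroup.zpowers z) * 2 ≤ Nat.card G := by
          rw [hn]
          exact Nat.mul_le_mul_left _ (by omega)
        omega
      have hModd : Odd (Nat.card (G ⧸ Subgroup.zpowers z)) := by
        rcases Nat.even_or_odd (Nat.card (G ⧸ Subgroup.zpowers z)) with he | ho
        · exfalso
          have h2n : (2:ℕ) ∣ Nat.card G := by
            refine dvd_trans he.two_dvd ⟨orderOf z, hn⟩
          exact (Nat.not_even_iff_odd.mpr hodd) (even_iff_two_dvd.mpr h2n)
        · exact ho
      haveI : Group.IsNilpotent (G ⧸ Subgroup.zpowers z) := inferInstance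
      obtain ⟨gQ, hgQ⟩ := ih (Nat.card (G ⧸ Subgroup.zpowers z)) hMlt
        (G ⧸ Subgroup.zpowers z) inferInstance hModd rfl
      exact step hzc hz1 rfl rfl rfl hodd gQ hgQ

/-- Every finite nilpotent group of odd order is `D^∞`-balanced: it admits a cycle `g`
of some length `L` divisible by the order of the group such that `D^r(g)` is balanced
for every `r ≥ 0`. -/
theorem statement17 (G : Type*) [Group G] [Finite G] (hnil : Group.IsNilpotent G)
    (hodd : Odd (Nat.card G)) :
    ∃ L : ℕ, 0 < L ∧ Nat.card G ∣ L ∧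
      ∃ g : ZMod L → G, ∀ r : ℕ, IsBalanced G (Dop^[r] g) := by
  obtain ⟨g, hg⟩ := key (Nat.card G) G hnil hodd rfl
  refine ⟨2 * Nat.card G, ?_, dvd_mul_left _ 2, g, hg⟩
  have : 0 < Nat.card G := Nat.card_pos
  omega
end

section
/- Every finite group G is D^r-balanced for every integer r ≥ 1: for each r there is a cycle g over G of some length L divisible by the order n of G such that D^s(g) is balanced for all integers 0 ≤ s ≤ r. (One may take L = n^{r+1} and g a De Bruijn cycle of order r+1 over G.) -/
/-! ### Auxiliary arithmetic lemmas -/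

/-- the letter of the necklace at position `q`: digit `q % k` of word `q / k` in base `n`. -/
def lettN (n k q : ℕ) : ℕ := q / k / n ^ (q % k) % n

lemma lettN_eval (n k t x : ℕ) (hk : 0 < k) (hx : x < k) :
    lettN n k (k * t + x) = t / n ^ x % n := by
  unfold lettN
  rw [Nat.mul_add_div hk, Nat.mul_add_mod, Nat.div_eq_of_lt hx, Nat.mod_eq_of_lt hx, add_zero]

lemma lett_add (n k p j : ℕ) (hn : 0 < n) (hk : 0 < k) (hp : p < k * n ^ k) (hj : j < k) :
    lettN n k ((p + j) % (k * n ^ k)) =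
      if p % k + j < k then p / k / n ^ (p % k + j) % n
      else ((p / k + 1) % n ^ k) / n ^ (p % k + j - k) % n := by
  have hN : 0 < n ^ k := pow_pos hn k
  have hρk : p % k < k := Nat.mod_lt _ hk
  have htN : p / k < n ^ k := by
    rw [Nat.div_lt_iff_lt_mul hk]
    exact lt_of_lt_of_eq hp (Nat.mul_comm k (n ^ k))
  have hpd : k * (p / k) + p % k = p := Nat.div_add_mod p k
  have hexp : k * (p / k + 1) = k * (p / k) + k := by ring
  have hexp2 : k * (p / k + 1 + 1) = k * (p / k + 1) + k := by ring
  by_cases hcase : p % k + j < k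
  · have h1 : p + j = k * (p / k) + (p % k + j) := by omega
    have h2 : p + j < k * n ^ k := by
      calc p + j = k * (p / k) + (p % k + j) := h1
      _ < k * (p / k) + k := by omega
      _ = k * (p / k + 1) := by ring
      _ ≤ k * n ^ k := Nat.mul_le_mul_left k (by omega)

    rw [Nat.mod_eq_of_lt h2, h1, lettN_eval n k _ _ hk hcase, if_pos hcase]
  · rw [if_neg hcase]
    have hx : p % k + j - k < k := by omega
    have heq : p + j = k * (p / k + 1) + (p % k + j - k) := by omega
    rw [heq]
    by_cases hw : p / k + 1 < n ^ k
    · have h2 : k * (p / k + 1) + (p % k + j - k) < k * n ^ k := by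
        calc k * (p / k + 1) + (p % k + j - k) < k * (p / k + 1) + k := by omega
        _ = k * (p / k + 1 + 1) := by ring
        _ ≤ k * n ^ k := Nat.mul_le_mul_left k (by omega)
      rw [Nat.mod_eq_of_lt h2, lettN_eval n k _ _ hk hx, Nat.mod_eq_of_lt hw]
    · have ht1 : p / k + 1 = n ^ k := by omega
      rw [ht1, Nat.mod_self, Nat.zero_div, Nat.zero_mod, Nat.add_mod_left,
        Nat.mod_eq_of_lt (lt_of_lt_of_le hx (Nat.le_mul_of_pos_right k hN))]
      unfold lettN
      rw [Nat.div_eq_of_lt hx, Nat.zero_div, Nat.zero_mod]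

lemma digits_det (n : ℕ) (hn : 0 < n) :
    ∀ m (u v : ℕ), u < n ^ m → v < n ^ m →
      (∀ j < m, u / n ^ j % n = v / n ^ j % n) → u = v := by
  intro m
  induction m with
  | zero => intro u v hu hv _; simp at hu hv; omega
  | succ m ih =>
    intro u v hu hv h
    have h0 : u % n = v % n := by simpa using h 0 (by omega)
    have hdig : ∀ j < m, u / n / n ^ j % n = v / n / n ^ j % n := by
      intro j hj
      rw [Nat.div_div_eq_div_mul, Nat.div_div_eq_div_mul, ← pow_succ']
      exact h (j + 1) (by omega)
    have hu' : u / n < n ^ m := by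
      rw [Nat.div_lt_iff_lt_mul hn]
      rw [pow_succ] at hu
      exact hu
    have hv' : v / n < n ^ m := by
      rw [Nat.div_lt_iff_lt_mul hn]
      rw [pow_succ] at hv
      exact hv
    have := ih (u / n) (v / n) hu' hv' hdig
    have hu2 := Nat.div_add_mod u n
    have hv2 := Nat.div_add_mod v n
    rw [this, h0] at hu2
    omega

lemma mod_pow_digit (n ρ j a : ℕ) (hj : j < ρ) :
    a % n ^ ρ / n ^ j % n = a / n ^ j % n := by
  rcases Nat.eq_zero_or_pos n with rfl | hn
  · simp [Nat.zero_pow (show 0 < ρ by omega), Nat.mod_zero]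
  have hj' : 0 < n ^ j := pow_pos hn j
  obtain ⟨c, hc⟩ : n ∣ n ^ (ρ - j) := dvd_pow_self n (by omega)
  have hsplit : n ^ ρ * (a / n ^ ρ) = n ^ j * (n * (c * (a / n ^ ρ))) := by
    rw [show n ^ ρ = n ^ j * n ^ (ρ - j) by rw [← pow_add]; congr 1; omega, hc]; ring
  conv_rhs => rw [← Nat.div_add_mod a (n ^ ρ), hsplit, Nat.mul_add_div hj', Nat.mul_add_mod]

lemma win_inj (n k p q : ℕ) (hn : 0 < n) (hk : 0 < k)
    (hp : p < k * n ^ k) (hq : q < k * n ^ k) (hrho : p % k = q % k)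
    (hw : ∀ j < k, lettN n k ((p + j) % (k * n ^ k)) = lettN n k ((q + j) % (k * n ^ k))) :
    p = q := by
  have hN : 0 < n ^ k := pow_pos hn k
  have hρk : p % k < k := Nat.mod_lt _ hk
  have key : ∀ j < k,
      (if p % k + j < k then p / k / n ^ (p % k + j) % n
        else ((p / k + 1) % n ^ k) / n ^ (p % k + j - k) % n) =
      (if p % k + j < k then q / k / n ^ (p % k + j) % n
        else ((q / k + 1) % n ^ k) / n ^ (p % k + j - k) % n) := by
    intro j hj
    rw [← lett_add n k p j hn hk hp hj]
    conv_rhs => rw [show p % k = q % k from hrho]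
    rw [← lett_add n k q j hn hk hq hj]
    exact hw j hj
  have hdivlt : ∀ a : ℕ, a < n ^ k → a / n ^ (p % k) < n ^ (k - p % k) := by
    intro a ha
    rw [Nat.div_lt_iff_lt_mul (pow_pos hn _), ← pow_add]
    calc a < n ^ k := ha
    _ ≤ n ^ (k - p % k + p % k) := by
        apply Nat.pow_le_pow_right hn
        omega
  have htp : p / k < n ^ k := by
    rw [Nat.div_lt_iff_lt_mul hk]; exact lt_of_lt_of_eq hp (Nat.mul_comm k (n ^ k))
  have htq : q / k < n ^ k := by
    rw [Nat.div_lt_iff_lt_mul hk]; exact lt_of_lt_of_eq hq (Nat.mul_comm k (n ^ k))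
  -- high digits
  have h1 : p / k / n ^ (p % k) = q / k / n ^ (p % k) := by
    apply digits_det n hn (k - p % k) _ _ (hdivlt _ htp) (hdivlt _ htq)
    intro j hj
    have := key j (by omega)
    rw [if_pos (by omega), if_pos (by omega)] at this
    have e : ∀ a : ℕ, a / n ^ (p % k) / n ^ j = a / n ^ (p % k + j) := fun a => by
      rw [Nat.div_div_eq_div_mul, ← pow_add]
    rw [e, e]
    exact this
  -- low digits of successor
  have h2 : (p / k + 1) % n ^ (p % k) = (q / k + 1) % n ^ (p % k) := by
    have h2' : (p / k + 1) % n ^ k % n ^ (p % k) = (q / k + 1) % n ^ k % n ^ (p % k) := by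
      apply digits_det n hn (p % k) _ _ (Nat.mod_lt _ (pow_pos hn _)) (Nat.mod_lt _ (pow_pos hn _))
      intro j hj
      rw [mod_pow_digit n (p % k) j _ hj, mod_pow_digit n (p % k) j _ hj]
      have := key (k - p % k + j) (by omega)
      rw [if_neg (by omega), if_neg (by omega)] at this
      rw [show p % k + (k - p % k + j) - k = j by omega] at this
      exact this
    rwa [Nat.mod_mod_of_dvd _ (pow_dvd_pow n hρk.le),
      Nat.mod_mod_of_dvd _ (pow_dvd_pow n hρk.le)] at h2'
  have h3 : p / k % n ^ (p % k) = q / k % n ^ (p % k) :=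
    Nat.ModEq.add_right_cancel' 1 h2
  have h4 : p / k = q / k := by
    have e1 := Nat.div_add_mod (p / k) (n ^ (p % k))
    have e2 := Nat.div_add_mod (q / k) (n ^ (p % k))
    rw [← h1, ← h3] at e2
    omega
  have e1 := Nat.div_add_mod p k
  have e2 := Nat.div_add_mod q k
  rw [← h4, ← hrho] at e2
  omega

/-! ### Counting lemmas -/

lemma card_fiber_const {α β : Type*} [Finite α] [Finite β] (P : α → Prop) (φ : α → β) (c : ℕ)
    (h : ∀ b, Nat.card {a : α // P a ∧ φ a = b} = c) :
    Nat.card {a : α // P a} = Nat.card β * c := by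
  classical
  have e : {a : α // P a} ≃ Σ b : β, {a : α // P a ∧ φ a = b} :=
    { toFun := fun a => ⟨φ a.1, a.1, a.2, rfl⟩
      invFun := fun x => ⟨x.2.1, x.2.2.1⟩
      left_inv := fun a => rfl
      right_inv := fun x => by
        obtain ⟨b, a, hP, hφ⟩ := x
        subst hφ
        rfl }
  rw [Nat.card_congr e]
  cases nonempty_fintype β
  letI : ∀ b : β, Fintype {a : α // P a ∧ φ a = b} := fun b => Fintype.ofFinite _
  rw [Nat.card_eq_fintype_card, Fintype.card_sigma]
  have : ∀ b : β, Fintype.card {a : α // P a ∧ φ a = b} = c := by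
    intro b
    rw [← Nat.card_eq_fintype_card]
    exact h b
  rw [Finset.sum_congr rfl (fun b _ => this b), Finset.sum_const, Finset.card_univ,
    smul_eq_mul, Nat.card_eq_fintype_card]

lemma window_rec {G : Type*} [Group G] {L : ℕ} (h : ZMod L → G) (p : ZMod L)
    (w ψ : ℕ → G) (hψ : ∀ j, ψ (j + 1) = (w j)⁻¹ * ψ j) (m : ℕ) :
    (h p = ψ 0 ∧ ∀ j < m, Dop h (p + (j : ℕ)) = w j) ↔
      ∀ j < m + 1, h (p + (j : ℕ)) = ψ j := by
  induction m with
  | zero =>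
    constructor
    · rintro ⟨h0, -⟩ j hj
      have : j = 0 := by omega
      subst this
      simpa using h0
    · intro H
      exact ⟨by simpa using H 0 Nat.one_pos, fun j hj => absurd hj (Nat.not_lt_zero j)⟩
  | succ m ih =>
    constructor
    · rintro ⟨h0, hD⟩ j hj
      rcases Nat.lt_or_ge j (m + 1) with hj' | hj'
      · exact (ih.mp ⟨h0, fun i hi => hD i (by omega)⟩) j hj'
      · have hjm : j = m + 1 := by omega
        subst hjm
        have hm := hD m (by omega)
        have hprev : h (p + (m : ℕ)) = ψ m :=
          (ih.mp ⟨h0, fun i hi => hD i (by omega)⟩) m (by omega)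
        have hcast : ((m + 1 : ℕ) : ZMod L) = (m : ℕ) + 1 := by push_cast; ring
        rw [hcast, ← add_assoc]
        have hD' : h (p + (m : ℕ)) * (h (p + (m : ℕ) + 1))⁻¹ = w m := hm
        rw [hprev] at hD'
        rw [hψ m, ← hD']
        group
    · intro H
      have h' := ih.mpr (fun j hj => H j (by omega))
      refine ⟨h'.1, fun j hj => ?_⟩
      rcases Nat.lt_or_ge j m with hj' | hj'
      · exact h'.2 j hj'
      · have : j = m := by omega
        subst this
        have h1 : h (p + (j : ℕ)) = ψ j := H j (by omega)
        have h2 : h (p + (j : ℕ) + 1) = ψ (j + 1) := by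
          have := H (j + 1) (by omega)
          rwa [show ((j + 1 : ℕ) : ZMod L) = (j : ℕ) + 1 by push_cast; ring, ← add_assoc] at this
        show h (p + (j : ℕ)) * (h (p + (j : ℕ) + 1))⁻¹ = w j
        rw [h1, h2, hψ j]
        group

/-- Window-equidistribution property for windows of length `m` in a cycle of length `L`,
refined by the residue `mod k` of the position. -/
def Qprop {G : Type*} [Group G] (n k : ℕ) {L : ℕ} (m : ℕ) (h : ZMod L → G) : Prop :=
  ∀ ρ0, ρ0 < k → ∀ w : ℕ → G,
    Nat.card {p : ZMod L // p.val % k = ρ0 ∧ ∀ j < m, h (p + (j : ℕ)) = w j} = n ^ (k - m)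

lemma Qstep_drop {G : Type*} [Group G] [Finite G] {L : ℕ} [NeZero L] (k m : ℕ) (hm : m < k)
    (h : ZMod L → G) (hQ : Qprop (Nat.card G) k (m + 1) h) : Qprop (Nat.card G) k m h := by
  intro ρ0 hρ0 w
  have key : ∀ b : G,
      Nat.card {p : ZMod L //
        (p.val % k = ρ0 ∧ ∀ j < m, h (p + (j : ℕ)) = w j) ∧ h (p + (m : ℕ)) = b} =
        Nat.card G ^ (k - (m + 1)) := by
    intro b
    have hq := hQ ρ0 hρ0 (fun j => if j = m then b else w j)
    rw [← hq]
    apply Nat.card_congr (Equiv.subtypeEquivRight ?_)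
    intro p
    constructor
    · rintro ⟨⟨h1, h2⟩, h3⟩
      refine ⟨h1, fun j hj => ?_⟩
      rcases Nat.lt_or_ge j m with hj' | hj'
      · simp only [if_neg (by omega : j ≠ m)]
        exact h2 j hj'
      · have : j = m := by omega
        subst this
        simp only [if_pos rfl]
        exact h3
    · rintro ⟨h1, h2⟩
      refine ⟨⟨h1, fun j hj => ?_⟩, ?_⟩
      · have := h2 j (by omega)
        rwa [if_neg (by omega : j ≠ m)] at this
      · have := h2 m (by omega)
        rwa [if_pos rfl] at this
  have := card_fiber_const
    (fun p : ZMod L => p.val % k = ρ0 ∧ ∀ j < m, h (p + (j : ℕ)) = w j)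
    (fun p => h (p + (m : ℕ))) _ key
  rw [this, ← pow_succ']
  congr 1
  omega

lemma Qstep_D {G : Type*} [Group G] [Finite G] {L : ℕ} [NeZero L] (k m : ℕ) (hm : m < k)
    (h : ZMod L → G) (hQ : Qprop (Nat.card G) k (m + 1) h) : Qprop (Nat.card G) k m (Dop h) := by
  intro ρ0 hρ0 w
  have key : ∀ b : G,
      Nat.card {p : ZMod L //
        (p.val % k = ρ0 ∧ ∀ j < m, Dop h (p + (j : ℕ)) = w j) ∧ h p = b} =
        Nat.card G ^ (k - (m + 1)) := by
    intro b
    set ψ : ℕ → G := fun j => Nat.rec b (fun i x => (w i)⁻¹ * x) j with hψdef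
    have hψ : ∀ j, ψ (j + 1) = (w j)⁻¹ * ψ j := fun j => rfl
    have hψ0 : ψ 0 = b := rfl
    have hq := hQ ρ0 hρ0 ψ
    rw [← hq]
    apply Nat.card_congr (Equiv.subtypeEquivRight ?_)
    intro p
    rw [← window_rec h p w ψ hψ m]
    constructor
    · rintro ⟨⟨h1, h2⟩, h3⟩
      exact ⟨h1, hψ0 ▸ h3, h2⟩
    · rintro ⟨h1, h2, h3⟩
      exact ⟨⟨h1, h3⟩, hψ0 ▸ h2⟩
  have := card_fiber_const
    (fun p : ZMod L => p.val % k = ρ0 ∧ ∀ j < m, Dop h (p + (j : ℕ)) = w j)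
    (fun p => h p) _ key
  rw [this, ← pow_succ']
  congr 1
  omega

lemma Q_drop {G : Type*} [Group G] [Finite G] {L : ℕ} [NeZero L] (k : ℕ) (h : ZMod L → G) :
    ∀ d, 1 + d ≤ k → Qprop (Nat.card G) k (1 + d) h → Qprop (Nat.card G) k 1 h := by
  intro d
  induction d with
  | zero => intro _ hq; exact hq
  | succ d ih =>
    intro hd hq
    refine ih (by omega) (Qstep_drop k (1 + d) (by omega) h ?_)
    rwa [show 1 + (d + 1) = (1 + d) + 1 by omega] at hq

lemma Q_balanced {G : Type*} [Group G] [Finite G] {L : ℕ} [NeZero L] (k : ℕ) (hk : 0 < k)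
    (hLk : L = k * Nat.card G ^ k)
    (h : ZMod L → G) (hQ : Qprop (Nat.card G) k 1 h) : IsBalanced G h := by
  intro x
  have key : ∀ ρ0 : Fin k,
      Nat.card {p : ZMod L // h p = x ∧ (⟨p.val % k, Nat.mod_lt _ hk⟩ : Fin k) = ρ0} =
        Nat.card G ^ (k - 1) := by
    intro ρ0
    have hq := hQ ρ0.val ρ0.isLt (fun _ => x)
    rw [← hq]
    apply Nat.card_congr (Equiv.subtypeEquivRight ?_)
    intro p
    constructor
    · rintro ⟨h1, h2⟩
      refine ⟨by rw [← h2], fun j hj => ?_⟩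
      have : j = 0 := by omega
      subst this
      simpa using h1
    · rintro ⟨h1, h2⟩
      exact ⟨by simpa using h2 0 Nat.one_pos, Fin.ext h1⟩
  have htot := card_fiber_const (fun p : ZMod L => h p = x)
    (fun p => (⟨p.val % k, Nat.mod_lt _ hk⟩ : Fin k)) _ key
  rw [htot, Nat.card_eq_fintype_card, Fintype.card_fin, hLk]
  have hpow : Nat.card G ^ k = Nat.card G ^ (k - 1) * Nat.card G := by
    rw [← pow_succ]
    congr 1
    omega
  rw [hpow, ← mul_assoc, Nat.mul_div_cancel _ Nat.card_pos]

/-- Every finite group `G` is `D^r`-balanced for every `r ≥ 1`: there is a cycle `g`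
over `G` of some length `L` divisible by the order of `G` such that `D^s(g)` is
balanced for all `0 ≤ s ≤ r`. -/
theorem statement18 (G : Type*) [Group G] [Finite G] (r : ℕ) (hr : 1 ≤ r) :
    ∃ L : ℕ, 0 < L ∧ Nat.card G ∣ L ∧
      ∃ g : ZMod L → G, ∀ s : ℕ, s ≤ r → IsBalanced G (Dop^[s] g) := by
  classical
  have hn : 0 < Nat.card G := Nat.card_pos
  set n := Nat.card G with hn_def
  set k := r + 1 with hk_def
  have hk : 0 < k := by omega
  have hN : 0 < n ^ k := pow_pos hn k
  set L := k * n ^ k with hL_def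
  have hL : 0 < L := by positivity
  haveI : NeZero L := ⟨hL.ne'⟩
  haveI := Fintype.ofFinite G
  have hcard : Fintype.card G = n := (Nat.card_eq_fintype_card (α := G)).symm
  let ε : Fin n ≃ G := (Fintype.equivFinOfCardEq hcard).symm
  let lett : ZMod L → Fin n := fun p => ⟨lettN n k p.val, Nat.mod_lt _ hn⟩
  let g : ZMod L → G := fun p => ε (lett p)
  have hkL : k ≤ L := Nat.le_mul_of_pos_right k hN
  have hval_add : ∀ (p : ZMod L) (j : ℕ), j < k →
      (p + (j : ZMod L)).val = (p.val + j) % L := by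
    intro p j hj
    rw [ZMod.val_add, ZMod.val_natCast, Nat.mod_eq_of_lt (lt_of_lt_of_le hj hkL)]
  -- the window map
  let Win : ZMod L → Fin k × (Fin k → Fin n) :=
    fun p => (⟨p.val % k, Nat.mod_lt _ hk⟩, fun j => lett (p + ((j : ℕ) : ZMod L)))
  have hWinj : Function.Injective Win := by
    intro p q hpq
    have h1 : p.val % k = q.val % k := by
      have := congrArg (fun v => (v.1 : Fin k).val) hpq
      simpa [Win] using this
    have h2 : ∀ j < k, lettN n k ((p.val + j) % L) = lettN n k ((q.val + j) % L) := by
      intro j hj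
      have := congrArg (fun v => ((v.2 (⟨j, hj⟩ : Fin k)) : Fin n).val) hpq
      simpa [Win, lett, hval_add p j hj, hval_add q j hj] using this
    apply ZMod.val_injective
    exact win_inj n k p.val q.val hn hk (by rw [← hL_def]; exact ZMod.val_lt p)
      (by rw [← hL_def]; exact ZMod.val_lt q) h1 (by rw [← hL_def]; exact h2)
  have hWbij : Function.Bijective Win := by
    rw [Fintype.bijective_iff_injective_and_card]
    refine ⟨hWinj, ?_⟩
    rw [ZMod.card, Fintype.card_prod, Fintype.card_fun, Fintype.card_fin, Fintype.card_fin]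
  have hfiber : ∀ v, Nat.card {p : ZMod L // Win p = v} = 1 := by
    intro v
    rw [Nat.card_eq_one_iff_unique]
    obtain ⟨p0, hp0⟩ := hWbij.2 v
    exact ⟨⟨fun a b => Subtype.ext (hWinj (a.2.trans b.2.symm))⟩, ⟨p0, hp0⟩⟩
  -- base case: full windows are equidistributed with multiplicity one
  have hbase : Qprop n k k g := by
    intro ρ0 hρ0 w
    have hcongr : Nat.card {p : ZMod L // p.val % k = ρ0 ∧ ∀ j < k, g (p + (j : ℕ)) = w j} =
        Nat.card {p : ZMod L // Win p = (⟨ρ0, hρ0⟩, fun j : Fin k => ε.symm (w (j : ℕ)))} := by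
      apply Nat.card_congr (Equiv.subtypeEquivRight ?_)
      intro p
      rw [Prod.ext_iff, funext_iff]
      constructor
      · rintro ⟨h1, h2⟩
        refine ⟨Fin.ext h1, fun j => ?_⟩
        have := h2 (j : ℕ) j.isLt
        simp only [Win]
        rw [Equiv.eq_symm_apply]
        exact this
      · rintro ⟨h1, h2⟩
        refine ⟨by simpa using congrArg Fin.val h1, fun j hj => ?_⟩
        have := h2 ⟨j, hj⟩
        simp only [Win] at this
        rw [Equiv.eq_symm_apply] at this
        exact this
    rw [hcongr, hfiber, Nat.sub_self, pow_zero]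
  -- induction on the number of applications of D
  have hQs : ∀ s, s ≤ r → Qprop n k (k - s) (Dop^[s] g) := by
    intro s
    induction s with
    | zero => intro _; simpa using hbase
    | succ s ih =>
      intro hs
      have hq := ih (by omega)
      rw [show k - s = (k - (s + 1)) + 1 by omega] at hq
      have := Qstep_D k (k - (s + 1)) (by omega) _ hq
      rwa [Function.iterate_succ_apply']
  refine ⟨L, hL, ⟨k * n ^ r, by rw [hL_def, hk_def, pow_succ]; ring⟩, g, ?_⟩
  intro s hs
  have hq := hQs s hs
  have h1 : Qprop n k 1 (Dop^[s] g) := by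
    apply Q_drop k (Dop^[s] g) (k - s - 1) (by omega)
    rwa [show 1 + (k - s - 1) = k - s by omega]
  exact Q_balanced k hk hL_def _ h1
end
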